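/- arXiv:2301.07963 — 4 statements merged into one kernel-verified Lean document; each statement's English description precedes it below -/
import Mathlib

section
/- Let $(\mathcal{A},\delta)$ be a geodesic metric space of atoms. Let $\mu_0 = \sum_{j=1}^J \lambda_0^j a_0^j$ and $\mu_1 = \sum_{k=1}^K \lambda_1^k a_1^k$ be two finite mixtures, let $w^*$ be an optimal discrete coupling achieving $\delta_{\mathcal{M},p}(\mu_0,\mu_1)$, and for each $(j,k)$ let $(a_t^{jk})_{t\in[0,1]}$ be a constant-speed geodesic in $\mathcal{A}$ from $a_0^j$ to $a_1^k$. Then the path $\mu_t = \sum_{j,k} w^*_{jk} a_t^{jk}$ satisfies $\delta_{\mathcal{M},p}(\mu_s, \mu_t) \le |t-s|\, \delta_{\mathcal{M},p}(\mu_0,\mu_1)$ for all $s,t \in [0,1]$; consequently $(\mu_t)$ is a constant-speed geodesic and $(\mathcal{M}(\mathcal{A}), \delta_{\mathcal{M},p})$ is a geodesic space. -/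
open Finset Set

/-- The mixture Wasserstein-type distance `δ_{M,p}` between two finite mixtures. -/
noncomputable def mixDist {A : Type*} (δ : A → A → ℝ) (p : ℝ)
    {ι κ : Type*} [Fintype ι] [Fintype κ]
    (lam0 : ι → ℝ) (a0 : ι → A) (lam1 : κ → ℝ) (a1 : κ → A) : ℝ :=
  sInf { s : ℝ | ∃ w : ι → κ → ℝ,
    (∀ j k, 0 ≤ w j k) ∧ (∀ j, ∑ k, w j k = lam0 j) ∧ (∀ k, ∑ j, w j k = lam1 k) ∧
    s = (∑ j, ∑ k, w j k * δ (a0 j) (a1 k) ^ p) ^ (1 / p) }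

/-- If `(A,δ)` is a geodesic metric space of atoms, `w*` is an optimal discrete coupling
between the mixtures `μ0 = ∑ λ0^j a0^j` and `μ1 = ∑ λ1^k a1^k`, and `(a_t^{jk})` are
constant-speed geodesics from `a0^j` to `a1^k`, then the mixture path
`μ_t = ∑_{j,k} w*_{jk} a_t^{jk}` satisfies
`δ_{M,p}(μ_s,μ_t) ≤ |t-s| δ_{M,p}(μ0,μ1)`, i.e. it is a constant-speed geodesic. -/
theorem stmt_2 {A : Type*} (δ : A → A → ℝ) (p : ℝ) (hp : 1 < p)
    (hδ_nonneg : ∀ a b, 0 ≤ δ a b) (hδ_symm : ∀ a b, δ a b = δ b a)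
    (hδ_eq : ∀ a b, δ a b = 0 ↔ a = b)
    (hδ_tri : ∀ a b c, δ a c ≤ δ a b + δ b c)
    {J K : ℕ}
    (lam0 : Fin J → ℝ) (a0 : Fin J → A)
    (lam1 : Fin K → ℝ) (a1 : Fin K → A)
    (h0 : (∀ j, 0 ≤ lam0 j) ∧ ∑ j, lam0 j = 1)
    (h1 : (∀ k, 0 ≤ lam1 k) ∧ ∑ k, lam1 k = 1)
    (w : Fin J → Fin K → ℝ)
    (hw : (∀ j k, 0 ≤ w j k) ∧ (∀ j, ∑ k, w j k = lam0 j) ∧ (∀ k, ∑ j, w j k = lam1 k))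
    (hopt : (∑ j, ∑ k, w j k * δ (a0 j) (a1 k) ^ p) ^ (1 / p)
      = mixDist δ p lam0 a0 lam1 a1)
    (a : Fin J → Fin K → ℝ → A)
    (ha0 : ∀ j k, a j k 0 = a0 j) (ha1 : ∀ j k, a j k 1 = a1 k)
    (hgeo : ∀ j k, ∀ s ∈ Icc (0:ℝ) 1, ∀ t ∈ Icc (0:ℝ) 1,
      δ (a j k s) (a j k t) = |t - s| * δ (a0 j) (a1 k)) :
    ∀ s ∈ Icc (0:ℝ) 1, ∀ t ∈ Icc (0:ℝ) 1,
      mixDist δ p (fun jk : Fin J × Fin K => w jk.1 jk.2) (fun jk => a jk.1 jk.2 s)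
          (fun jk : Fin J × Fin K => w jk.1 jk.2) (fun jk => a jk.1 jk.2 t)
        ≤ |t - s| * mixDist δ p lam0 a0 lam1 a1 := by
  obtain ⟨hw0, hwr, hwc⟩ := hw
  intro s hs t ht
  have hp0 : (0:ℝ) < p := lt_trans one_pos hp
  set C := ∑ j, ∑ k, w j k * δ (a0 j) (a1 k) ^ p with hC
  have hCnn : 0 ≤ C := Finset.sum_nonneg fun j _ => Finset.sum_nonneg fun k _ =>
    mul_nonneg (hw0 j k) (Real.rpow_nonneg (hδ_nonneg _ _) p)
  have hbdd : BddBelow { x : ℝ | ∃ w' : (Fin J × Fin K) → (Fin J × Fin K) → ℝ,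
      (∀ j k, 0 ≤ w' j k) ∧
      (∀ j, ∑ k, w' j k = (fun jk : Fin J × Fin K => w jk.1 jk.2) j) ∧
      (∀ k, ∑ j, w' j k = (fun jk : Fin J × Fin K => w jk.1 jk.2) k) ∧
      x = (∑ j, ∑ k, w' j k * δ ((fun jk => a jk.1 jk.2 s) j)
        ((fun jk => a jk.1 jk.2 t) k) ^ p) ^ (1 / p) } := by
    refine ⟨0, ?_⟩
    rintro x ⟨w', h1, _, _, rfl⟩
    exact Real.rpow_nonneg (Finset.sum_nonneg fun j _ => Finset.sum_nonneg fun k _ =>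
      mul_nonneg (h1 j k) (Real.rpow_nonneg (hδ_nonneg _ _) p)) _
  have hmem : |t - s| * mixDist δ p lam0 a0 lam1 a1 ∈ { x : ℝ | ∃ w' : (Fin J × Fin K) → (Fin J × Fin K) → ℝ,
      (∀ j k, 0 ≤ w' j k) ∧
      (∀ j, ∑ k, w' j k = (fun jk : Fin J × Fin K => w jk.1 jk.2) j) ∧
      (∀ k, ∑ j, w' j k = (fun jk : Fin J × Fin K => w jk.1 jk.2) k) ∧
      x = (∑ j, ∑ k, w' j k * δ ((fun jk => a jk.1 jk.2 s) j)
        ((fun jk => a jk.1 jk.2 t) k) ^ p) ^ (1 / p) } := by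
    refine ⟨fun i j => if i = j then w i.1 i.2 else 0, ?_, ?_, ?_, ?_⟩
    · intro i j; dsimp only; split
      · exact hw0 _ _
      · exact le_refl 0
    · intro i; simp
    · intro j; simp
    · have hsum : (∑ i : Fin J × Fin K, ∑ j : Fin J × Fin K,
          (if i = j then w i.1 i.2 else 0) * δ (a i.1 i.2 s) (a j.1 j.2 t) ^ p)
          = |t - s| ^ p * C := by
        have : ∀ i : Fin J × Fin K, (∑ j : Fin J × Fin K,
            (if i = j then w i.1 i.2 else 0) * δ (a i.1 i.2 s) (a j.1 j.2 t) ^ p)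
            = w i.1 i.2 * δ (a i.1 i.2 s) (a i.1 i.2 t) ^ p := by
          intro i
          rw [Finset.sum_eq_single i]
          · simp
          · intro b _ hb; simp [Ne.symm hb]
          · simp
        rw [Finset.sum_congr rfl fun i _ => this i]
        have : ∀ i : Fin J × Fin K, w i.1 i.2 * δ (a i.1 i.2 s) (a i.1 i.2 t) ^ p
            = |t - s| ^ p * (w i.1 i.2 * δ (a0 i.1) (a1 i.2) ^ p) := by
          intro i
          rw [hgeo i.1 i.2 s hs t ht,
            Real.mul_rpow (abs_nonneg _) (hδ_nonneg _ _)]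
          ring
        rw [Finset.sum_congr rfl fun i _ => this i, ← Finset.mul_sum, hC,
          ← Finset.sum_product']
        rfl
      rw [hsum, Real.mul_rpow (Real.rpow_nonneg (abs_nonneg _) p) hCnn,
        ← Real.rpow_mul (abs_nonneg _), mul_one_div, div_self hp0.ne',
        Real.rpow_one, hopt]
  exact csInf_le hbdd hmem
end

section
/- Let $\Omega \subset \mathbb{R}^d$ be convex with Euclidean cost $c(x,y) = \|x-y\|$, and let $S: \Omega \to \Omega$ be a measurable map which is an isometry ($c(S(x),S(y)) = c(x,y)$) and commutes with convex combinations ($S(\sum_i t_i x_i) = \sum_i t_i S(x_i)$ for barycentric weights $t$). Let $\mu_1,\ldots,\mu_n$ be probability measures invariant under $S$, and suppose the associated multi-marginal problem with cost $C(x_1,\ldots,x_n) = \sum_{i,j} t_i t_j c(x_i,x_j)^p$ has a unique optimal plan. Then the $p$-Wasserstein barycenter $\nu$ of $\mu_1,\ldots,\mu_n$ with weights $(t_1,\ldots,t_n)$ is also invariant under $S$: $S\#\nu = \nu$. -/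
open MeasureTheory ENNReal Finset

/-- The `p`-th power of the `p`-Wasserstein distance (for the distance cost). -/
noncomputable def Wpp {E : Type*} [MeasurableSpace E] [MetricSpace E]
    (p : ℝ) (μ ν : Measure E) : ℝ≥0∞ :=
  ⨅ (γ : Measure (E × E)) (_ : γ.map Prod.fst = μ ∧ γ.map Prod.snd = ν),
    ∫⁻ z, ENNReal.ofReal (dist z.1 z.2 ^ p) ∂γ

/-- If `S` is a measurable isometry of `ℝ^d` commuting with convex combinations, the
measures `μ₁,…,μₙ` are `S`-invariant, and the associated multi-marginal problem with
cost `∑ tᵢtⱼ ‖xᵢ-xⱼ‖^p` has a unique optimal plan, then the (unique) `p`-Wasserstein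
barycenter `ν` of `μ₁,…,μₙ` with weights `t` is `S`-invariant. -/
theorem stmt_11 {d n : ℕ} (p : ℝ) (hp : 1 < p)
    (S : EuclideanSpace ℝ (Fin d) → EuclideanSpace ℝ (Fin d))
    (hS_meas : Measurable S)
    (hS_isom : ∀ x y, dist (S x) (S y) = dist x y)
    (hS_affine : ∀ (m : ℕ) (s : Fin m → ℝ), (∀ i, 0 ≤ s i) → (∑ i, s i) = 1 →
      ∀ x : Fin m → EuclideanSpace ℝ (Fin d),
        S (∑ i, s i • x i) = ∑ i, s i • S (x i))
    (μ : Fin n → Measure (EuclideanSpace ℝ (Fin d)))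
    (hμ_prob : ∀ i, IsProbabilityMeasure (μ i))
    (hμ_inv : ∀ i, (μ i).map S = μ i)
    (t : Fin n → ℝ) (ht : (∀ i, 0 ≤ t i) ∧ ∑ i, t i = 1)
    (γ : Measure (Fin n → EuclideanSpace ℝ (Fin d)))
    (hγ_plan : ∀ q, γ.map (fun x => x q) = μ q)
    (hγ_opt : ∀ γ' : Measure (Fin n → EuclideanSpace ℝ (Fin d)),
      (∀ q, γ'.map (fun x => x q) = μ q) →
      ∫⁻ x, ∑ i, ∑ j, ENNReal.ofReal (t i * t j * dist (x i) (x j) ^ p) ∂γ ≤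
        ∫⁻ x, ∑ i, ∑ j, ENNReal.ofReal (t i * t j * dist (x i) (x j) ^ p) ∂γ')
    (hγ_unique : ∀ γ' : Measure (Fin n → EuclideanSpace ℝ (Fin d)),
      (∀ q, γ'.map (fun x => x q) = μ q) →
      (∫⁻ x, ∑ i, ∑ j, ENNReal.ofReal (t i * t j * dist (x i) (x j) ^ p) ∂γ' =
        ∫⁻ x, ∑ i, ∑ j, ENNReal.ofReal (t i * t j * dist (x i) (x j) ^ p) ∂γ) → γ' = γ)
    (ν : Measure (EuclideanSpace ℝ (Fin d))) [IsProbabilityMeasure ν]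
    (hν_min : ∀ ρ : Measure (EuclideanSpace ℝ (Fin d)), IsProbabilityMeasure ρ →
      ∑ i, ENNReal.ofReal (t i) * Wpp p ν (μ i) ≤
        ∑ i, ENNReal.ofReal (t i) * Wpp p ρ (μ i))
    (hν_unique : ∀ ρ : Measure (EuclideanSpace ℝ (Fin d)), IsProbabilityMeasure ρ →
      (∑ i, ENNReal.ofReal (t i) * Wpp p ρ (μ i) =
        ∑ i, ENNReal.ofReal (t i) * Wpp p ν (μ i)) → ρ = ν) :
    ν.map S = ν := by
  have hprod : Measurable (Prod.map S S) := hS_meas.prodMap hS_meas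
  have hcost : Measurable (fun z : EuclideanSpace ℝ (Fin d) × EuclideanSpace ℝ (Fin d) =>
      ENNReal.ofReal (dist z.1 z.2 ^ p)) := by
    apply Measurable.ennreal_ofReal
    exact (measurable_fst.dist measurable_snd).pow_const p
  have key : ∀ i, Wpp p (ν.map S) (μ i) ≤ Wpp p ν (μ i) := by
    intro i
    unfold Wpp
    refine le_iInf₂ fun π hπ => ?_
    refine iInf₂_le_of_le (π.map (Prod.map S S)) ⟨?_, ?_⟩ ?_
    · rw [Measure.map_map measurable_fst hprod]
      have : Prod.fst ∘ Prod.map S S =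
          S ∘ (Prod.fst : _ → EuclideanSpace ℝ (Fin d)) := rfl
      rw [this, ← Measure.map_map hS_meas measurable_fst, hπ.1]
    · rw [Measure.map_map measurable_snd hprod]
      have : Prod.snd ∘ Prod.map S S =
          S ∘ (Prod.snd : _ → EuclideanSpace ℝ (Fin d)) := rfl
      rw [this, ← Measure.map_map hS_meas measurable_snd, hπ.2, hμ_inv]
    · rw [lintegral_map hcost hprod]
      apply le_of_eq
      refine lintegral_congr fun z => ?_
      simp [Prod.map, hS_isom]
  have hprob : IsProbabilityMeasure (ν.map S) := Measure.isProbabilityMeasure_map hS_meas.aemeasurable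
  refine hν_unique (ν.map S) hprob (le_antisymm ?_ (hν_min (ν.map S) hprob))
  exact Finset.sum_le_sum fun i _ => mul_le_mul_right (key i) _
end

section
/- Let $S: \Omega \to \Omega$ be a reflection (an isometry for the cost $c$ with $S^2 = \mathrm{Id}$), and suppose $\Omega = \Omega_1 \sqcup \Omega_2$ with $S(\Omega_1) = \Omega_2$ and $S(\Omega_2) = \Omega_1$, and that $c(x,y) \le c(S(x),y)$ whenever $(x,y) \in (\Omega_1\times\Omega_1) \cup (\Omega_2\times\Omega_2)$. Let $\mu_1,\ldots,\mu_n$ be $S$-invariant probability measures and suppose the multi-marginal optimal transport problem with cost $C(x_1,\ldots,x_n) = \sum_{k,l} t_k t_l c(x_k,x_l)^p$ has a unique solution $\gamma$. Then the support of $\gamma$ is contained in $\Omega_1^n \cup \Omega_2^n$. -/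
open MeasureTheory ENNReal Finset Set

/-- If `S` is a reflection of `Ω` exchanging the two pieces `Ω₁, Ω₂` of a partition,
with `c(x,y) ≤ c(S(x),y)` on `(Ω₁×Ω₁) ∪ (Ω₂×Ω₂)`, and the marginals are `S`-invariant,
then the unique optimal multi-marginal plan is supported in `Ω₁ⁿ ∪ Ω₂ⁿ`. -/
theorem stmt_12 {Ω : Type*} [MeasurableSpace Ω] {n : ℕ} (p : ℝ) (hp : 1 < p)
    (c : Ω → Ω → ℝ) (hc_nonneg : ∀ x y, 0 ≤ c x y)
    (hc_meas : Measurable (Function.uncurry c))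
    (S : Ω → Ω) (hS_meas : Measurable S)
    (hS_isom : ∀ x y, c (S x) (S y) = c x y) (hS_invol : S ∘ S = id)
    (O1 O2 : Set Ω) (hO1 : MeasurableSet O1) (hO2 : MeasurableSet O2)
    (hdisj : O1 ∩ O2 = ∅) (hunion : O1 ∪ O2 = univ)
    (hS12 : S '' O1 = O2) (hS21 : S '' O2 = O1)
    (hcost : ∀ x y, ((x ∈ O1 ∧ y ∈ O1) ∨ (x ∈ O2 ∧ y ∈ O2)) → c x y ≤ c (S x) y)
    (μ : Fin n → Measure Ω) (hμ_prob : ∀ q, IsProbabilityMeasure (μ q))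
    (hμ_inv : ∀ q, (μ q).map S = μ q)
    (t : Fin n → ℝ) (ht : (∀ q, 0 ≤ t q) ∧ ∑ q, t q = 1)
    (γ : Measure (Fin n → Ω))
    (hγ_plan : ∀ q, γ.map (fun x => x q) = μ q)
    (hγ_opt : ∀ γ' : Measure (Fin n → Ω), (∀ q, γ'.map (fun x => x q) = μ q) →
      ∫⁻ x, ∑ k, ∑ l, ENNReal.ofReal (t k * t l * c (x k) (x l) ^ p) ∂γ ≤
        ∫⁻ x, ∑ k, ∑ l, ENNReal.ofReal (t k * t l * c (x k) (x l) ^ p) ∂γ')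
    (hγ_unique : ∀ γ' : Measure (Fin n → Ω), (∀ q, γ'.map (fun x => x q) = μ q) →
      (∫⁻ x, ∑ k, ∑ l, ENNReal.ofReal (t k * t l * c (x k) (x l) ^ p) ∂γ' =
        ∫⁻ x, ∑ k, ∑ l, ENNReal.ofReal (t k * t l * c (x k) (x l) ^ p) ∂γ) → γ' = γ) :
    γ {x | ¬ ((∀ q, x q ∈ O1) ∨ (∀ q, x q ∈ O2))} = 0 := by
  classical
  have hSS : ∀ y, S (S y) = y := fun y => congrFun hS_invol y
  have hmem : ∀ y : Ω, y ∈ O1 ∨ y ∈ O2 := by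
    intro y
    have : y ∈ O1 ∪ O2 := hunion ▸ mem_univ y
    exact this
  have hnot12 : ∀ y : Ω, y ∈ O1 → y ∉ O2 := by
    intro y h1 h2
    have : y ∈ O1 ∩ O2 := ⟨h1, h2⟩
    rw [hdisj] at this
    exact this
  have hS1 : ∀ y, y ∈ O1 → S y ∈ O2 := fun y hy => hS12 ▸ ⟨y, hy, rfl⟩
  have hS2 : ∀ y, y ∈ O2 → S y ∈ O1 := fun y hy => hS21 ▸ ⟨y, hy, rfl⟩
  -- the folding map
  set f : Ω → Ω := fun y => if y ∈ O1 then y else S y with hf_def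
  have hf_meas : Measurable f := Measurable.ite hO1 measurable_id hS_meas
  have hf1 : ∀ y, f y ∈ O1 := by
    intro y
    by_cases hy : y ∈ O1
    · simpa [hf_def, hy]
    · have hy2 : y ∈ O2 := (hmem y).resolve_left hy
      simpa [hf_def, hy] using hS2 y hy2
  -- cost comparison for the fold
  have hfc : ∀ a b, c (f a) (f b) ≤ c a b := by
    intro a b
    by_cases ha : a ∈ O1 <;> by_cases hb : b ∈ O1
    · simp [hf_def, ha, hb]
    · -- a ∈ O1, b ∈ O2
      have hb2 : b ∈ O2 := (hmem b).resolve_left hb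
      have h1 : c a (S b) ≤ c (S a) (S b) := hcost a (S b) (Or.inl ⟨ha, hS2 b hb2⟩)
      have h2 : c (S a) (S b) = c a b := hS_isom a b
      simpa [hf_def, ha, hb, h2] using h1
    · -- a ∈ O2, b ∈ O1
      have ha2 : a ∈ O2 := (hmem a).resolve_left ha
      have h1 : c (S a) b ≤ c (S (S a)) b := hcost (S a) b (Or.inl ⟨hS2 a ha2, hb⟩)
      rw [hSS a] at h1
      simpa [hf_def, ha, hb] using h1
    · -- both in O2
      have h2 : c (S a) (S b) = c a b := hS_isom a b
      simpa [hf_def, ha, hb] using h2.le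
  -- the two product maps
  set F : (Fin n → Ω) → (Fin n → Ω) := fun x q => f (x q) with hF_def
  set G : (Fin n → Ω) → (Fin n → Ω) := fun x q => S (f (x q)) with hG_def
  have hF_meas : Measurable F :=
    measurable_pi_lambda _ (fun q => hf_meas.comp (measurable_pi_apply q))
  have hG_meas : Measurable G :=
    measurable_pi_lambda _ (fun q => (hS_meas.comp hf_meas).comp (measurable_pi_apply q))
  -- the cost function
  set C : (Fin n → Ω) → ℝ≥0∞ :=
    fun x => ∑ k, ∑ l, ENNReal.ofReal (t k * t l * c (x k) (x l) ^ p) with hC_def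
  have hC_meas : Measurable C := by
    apply Finset.measurable_sum
    intro k _
    apply Finset.measurable_sum
    intro l _
    apply Measurable.ennreal_ofReal
    apply Measurable.const_mul
    have hkl : Measurable fun x : Fin n → Ω => c (x k) (x l) := by
      have : Measurable fun x : Fin n → Ω => Function.uncurry c (x k, x l) :=
        hc_meas.comp ((measurable_pi_apply k).prodMk (measurable_pi_apply l))
      exact this
    exact hkl.pow_const p
  -- candidate measure
  set γt : Measure (Fin n → Ω) := (2 : ℝ≥0∞)⁻¹ • (γ.map F + γ.map G) with hγt_def
  -- key measure identity for the fold on each marginal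
  have key : ∀ q, ∀ A : Set Ω, MeasurableSet A →
      μ q (f ⁻¹' A) + μ q ((fun y => S (f y)) ⁻¹' A) = 2 * μ q A := by
    intro q A hA
    have hO2c : O2 = O1ᶜ := by
      ext y
      constructor
      · intro hy hy1
        exact hnot12 y hy1 hy
      · intro hy
        exact (hmem y).resolve_left hy
    have hinv : ∀ B : Set Ω, MeasurableSet B → μ q (S ⁻¹' B) = μ q B := by
      intro B hB
      conv_rhs => rw [← hμ_inv q]
      rw [Measure.map_apply hS_meas hB]
    have e1 : f ⁻¹' A = (A ∩ O1) ∪ (O1ᶜ ∩ S ⁻¹' A) := by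
      ext y
      by_cases hy : y ∈ O1 <;> simp [hf_def, hy]
    have e2 : (fun y => S (f y)) ⁻¹' A = (S ⁻¹' A ∩ O1) ∪ (O1ᶜ ∩ A) := by
      ext y
      by_cases hy : y ∈ O1 <;> simp [hf_def, hy, hSS]
    have d1 : Disjoint (A ∩ O1) (O1ᶜ ∩ S ⁻¹' A) := by
      apply Set.disjoint_left.2
      rintro y ⟨-, h1⟩ ⟨h2, -⟩
      exact h2 h1
    have d2 : Disjoint (S ⁻¹' A ∩ O1) (O1ᶜ ∩ A) := by
      apply Set.disjoint_left.2
      rintro y ⟨-, h1⟩ ⟨h2, -⟩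
      exact h2 h1
    rw [e1, e2, measure_union d1 (hO1.compl.inter (hA.preimage hS_meas)),
      measure_union d2 (hO1.compl.inter hA)]
    have s1 : μ q (A ∩ O1) + μ q (O1ᶜ ∩ A) = μ q A := by
      rw [Set.inter_comm O1ᶜ A]
      rw [← measure_inter_add_diff A hO1, Set.diff_eq]
    have s2 : μ q (S ⁻¹' A ∩ O1) + μ q (O1ᶜ ∩ S ⁻¹' A) = μ q A := by
      rw [Set.inter_comm O1ᶜ _]
      rw [← hinv A hA, ← measure_inter_add_diff (S ⁻¹' A) hO1, Set.diff_eq]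
    calc μ q (A ∩ O1) + μ q (O1ᶜ ∩ S ⁻¹' A) + (μ q (S ⁻¹' A ∩ O1) + μ q (O1ᶜ ∩ A))
        = (μ q (A ∩ O1) + μ q (O1ᶜ ∩ A)) + (μ q (S ⁻¹' A ∩ O1) + μ q (O1ᶜ ∩ S ⁻¹' A)) := by
          ring
      _ = μ q A + μ q A := by rw [s1, s2]
      _ = 2 * μ q A := by ring
  -- γt is a transport plan
  have hγt_plan : ∀ q, γt.map (fun x => x q) = μ q := by
    intro q
    ext A hA
    rw [Measure.map_apply (measurable_pi_apply q) hA]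
    have hE : MeasurableSet ((fun x : Fin n → Ω => x q) ⁻¹' A) := hA.preimage (measurable_pi_apply q)
    have hfA : MeasurableSet (f ⁻¹' A) := hA.preimage hf_meas
    have hgA : MeasurableSet ((fun y => S (f y)) ⁻¹' A) := hA.preimage (hS_meas.comp hf_meas)
    have hFpre : F ⁻¹' ((fun x : Fin n → Ω => x q) ⁻¹' A) =
        (fun x : Fin n → Ω => x q) ⁻¹' (f ⁻¹' A) := rfl
    have hGpre : G ⁻¹' ((fun x : Fin n → Ω => x q) ⁻¹' A) =
        (fun x : Fin n → Ω => x q) ⁻¹' ((fun y => S (f y)) ⁻¹' A) := rfl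
    have hγF : γ ((fun x : Fin n → Ω => x q) ⁻¹' (f ⁻¹' A)) = μ q (f ⁻¹' A) := by
      rw [← Measure.map_apply (measurable_pi_apply q) hfA, hγ_plan q]
    have hγG : γ ((fun x : Fin n → Ω => x q) ⁻¹' ((fun y => S (f y)) ⁻¹' A)) =
        μ q ((fun y => S (f y)) ⁻¹' A) := by
      rw [← Measure.map_apply (measurable_pi_apply q) hgA, hγ_plan q]
    rw [hγt_def]
    simp only [Measure.smul_apply, Measure.add_apply, smul_eq_mul]
    rw [Measure.map_apply hF_meas hE, Measure.map_apply hG_meas hE, hFpre, hGpre,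
      hγF, hγG, key q A hA]
    rw [← mul_assoc, ENNReal.inv_mul_cancel two_ne_zero ENNReal.ofNat_ne_top, one_mul]
  -- cost of γt
  have hCG_eq_CF : ∀ x, C (G x) = C (F x) := by
    intro x
    simp only [hC_def, hF_def, hG_def]
    congr 1
    ext k
    congr 1
    ext l
    rw [hS_isom]
  have hCF_le : ∀ x, C (F x) ≤ C x := by
    intro x
    apply Finset.sum_le_sum
    intro k _
    apply Finset.sum_le_sum
    intro l _
    apply ENNReal.ofReal_le_ofReal
    apply mul_le_mul_of_nonneg_left _ (mul_nonneg (ht.1 k) (ht.1 l))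
    exact Real.rpow_le_rpow (hc_nonneg _ _) (hfc (x k) (x l)) (le_of_lt (lt_trans one_pos hp))
  have hcost_eq : ∫⁻ x, C x ∂γt = ∫⁻ x, C (F x) ∂γ := by
    rw [hγt_def, lintegral_smul_measure, lintegral_add_measure,
      lintegral_map hC_meas hF_meas, lintegral_map hC_meas hG_meas]
    have : ∫⁻ x, C (G x) ∂γ = ∫⁻ x, C (F x) ∂γ := by
      apply lintegral_congr
      intro x
      exact hCG_eq_CF x
    rw [this, ← two_mul, smul_eq_mul, ← mul_assoc,
      ENNReal.inv_mul_cancel two_ne_zero ENNReal.ofNat_ne_top, one_mul]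
  have hle : ∫⁻ x, C x ∂γt ≤ ∫⁻ x, C x ∂γ := by
    rw [hcost_eq]
    exact lintegral_mono fun x => hCF_le x
  have hge : ∫⁻ x, C x ∂γ ≤ ∫⁻ x, C x ∂γt := hγ_opt γt hγt_plan
  have hγt_eq : γt = γ := hγ_unique γt hγt_plan (le_antisymm hle hge)
  -- the bad set has γt-measure zero
  have hB : MeasurableSet {x : Fin n → Ω | ¬ ((∀ q, x q ∈ O1) ∨ (∀ q, x q ∈ O2))} := by
    have : {x : Fin n → Ω | ((∀ q, x q ∈ O1) ∨ (∀ q, x q ∈ O2))} =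
        (⋂ q, (fun x : Fin n → Ω => x q) ⁻¹' O1) ∪ (⋂ q, (fun x : Fin n → Ω => x q) ⁻¹' O2) := by
      ext x
      simp [Set.mem_iInter]
    apply MeasurableSet.compl (s := {x : Fin n → Ω | ((∀ q, x q ∈ O1) ∨ (∀ q, x q ∈ O2))})
    rw [this]
    exact ((MeasurableSet.iInter fun q => hO1.preimage (measurable_pi_apply q))).union
      (MeasurableSet.iInter fun q => hO2.preimage (measurable_pi_apply q))
  have hFB : F ⁻¹' {x : Fin n → Ω | ¬ ((∀ q, x q ∈ O1) ∨ (∀ q, x q ∈ O2))} = ∅ := by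
    apply Set.eq_empty_iff_forall_notMem.2
    intro x hx
    exact hx (Or.inl fun q => hf1 (x q))
  have hGB : G ⁻¹' {x : Fin n → Ω | ¬ ((∀ q, x q ∈ O1) ∨ (∀ q, x q ∈ O2))} = ∅ := by
    apply Set.eq_empty_iff_forall_notMem.2
    intro x hx
    exact hx (Or.inr fun q => hS1 _ (hf1 (x q)))
  rw [← hγt_eq, hγt_def]
  simp only [Measure.smul_apply, Measure.add_apply, smul_eq_mul]
  rw [Measure.map_apply hF_meas hB, Measure.map_apply hG_meas hB, hFB, hGB]
  simp
end

section
/- For the symmetrized multi-marginal problem over a finite/compact group $G$ acting isometrically, the multi-marginal value equals the barycentric value: $\bar d_Q^{\mathbf{t}}(\bar a_1,\ldots,\bar a_Q)^p = \inf_{\bar a \in \mathcal{A}_{\mathrm{sym}}} \sum_{q=1}^Q t_q\, \bar d(\bar a, \bar a_q)^p$, where $\bar d(\bar a, \bar a_q) = \inf_{g\in G} d(a, g\cdot a_q)$ and $d = W_p^c$, provided the set of atoms $\mathcal{A}$ is stable under Wasserstein barycenters and the multi-marginal problem on $\mathcal{A}$ is equivalent to the barycentric problem on $\mathcal{A}$.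 -/
open MeasureTheory ENNReal Finset

/-- `γ` is a transport plan between `μ` and `ν`. -/
def IsCoupling {Ω : Type*} [MeasurableSpace Ω] (γ : Measure (Ω × Ω))
    (μ ν : Measure Ω) : Prop :=
  γ.map Prod.fst = μ ∧ γ.map Prod.snd = ν

/-- The `p`-th power of the `p`-Wasserstein distance associated to the cost `c`. -/
noncomputable def WppC {Ω : Type*} [MeasurableSpace Ω] (c : Ω → Ω → ℝ≥0∞) (p : ℝ)
    (μ ν : Measure Ω) : ℝ≥0∞ :=
  ⨅ (γ : Measure (Ω × Ω)) (_ : IsCoupling γ μ ν), ∫⁻ z, c z.1 z.2 ^ p ∂γ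

/-- The multi-marginal optimal transport value with cost
`s(x₁,…,x_Q) = ½ ∑_{q,q'} t_q t_{q'} c(x_q,x_{q'})^p`. -/
noncomputable def MMval {Ω : Type*} [MeasurableSpace Ω] (c : Ω → Ω → ℝ≥0∞) (p : ℝ)
    {Q : ℕ} (t : Fin Q → ℝ) (b : Fin Q → Measure Ω) : ℝ≥0∞ :=
  ⨅ (γ : Measure (Fin Q → Ω)) (_ : ∀ q, γ.map (fun x => x q) = b q),
    ∫⁻ x, (2 : ℝ≥0∞)⁻¹ * ∑ q, ∑ q',
      ENNReal.ofReal (t q * t q') * c (x q) (x q') ^ p ∂γ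

private lemma iInf_pi_sum_aux {Q : ℕ} {G : Type*} [Nonempty G] (f : Fin Q → G → ℝ≥0∞) :
    (⨅ g : Fin Q → G, ∑ q, f q (g q)) = ∑ q, ⨅ x : G, f q x := by
  classical
  have h := ENNReal.iInf_sum (ι := Fin Q → G) (f := fun g q => f q (g q))
    (s := Finset.univ) (h := ?_)
  · rw [h]
    refine Finset.sum_congr rfl fun q _ => le_antisymm ?_ ?_
    · exact le_iInf fun x => iInf_le_of_le (fun _ => x) le_rfl
    · exact le_iInf fun g => iInf_le _ (g q)
  · intro s i j
    refine ⟨fun q => if f q (i q) ≤ f q (j q) then i q else j q, fun q _ => ?_⟩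
    by_cases h : f q (i q) ≤ f q (j q) <;> simp [h, le_of_not_ge]

/-- For a group `G` acting measurably on `Ω` with the Wasserstein distance
`G`-invariant, a set of atoms `𝒜` stable under the action and under Wasserstein
barycenters (expressed by the equivalence between the multi-marginal and barycentric
problems on `𝒜`), the symmetrized multi-marginal value equals the symmetrized
barycentric value:
`d̄_Q^t(ā₁,…,ā_Q)^p = inf_{ā ∈ 𝒜_sym} ∑_q t_q d̄(ā, ā_q)^p`. -/
theorem stmt_15 {Ω : Type*} [MeasurableSpace Ω]
    {G : Type*} [Group G] [MulAction G Ω]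
    (hmeas : ∀ g : G, Measurable (fun x : Ω => g • x))
    (c : Ω → Ω → ℝ≥0∞) (hc_meas : Measurable (Function.uncurry c)) (p : ℝ) (hp : 1 < p)
    (𝒜 : Set (Measure Ω)) (h𝒜_prob : ∀ a ∈ 𝒜, IsProbabilityMeasure a)
    (h𝒜_stable : ∀ (g : G), ∀ a ∈ 𝒜, a.map (fun x => g • x) ∈ 𝒜)
    (hWinv : ∀ (g : G) (a b : Measure Ω), a ∈ 𝒜 → b ∈ 𝒜 →
      WppC c p (a.map (fun x => g • x)) (b.map (fun x => g • x)) = WppC c p a b)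
    {Q : ℕ} (t : Fin Q → ℝ) (ht : (∀ q, 0 ≤ t q) ∧ ∑ q, t q = 1)
    (hequiv : ∀ b : Fin Q → Measure Ω, (∀ q, b q ∈ 𝒜) →
      MMval c p t b = ⨅ a ∈ 𝒜, ∑ q, ENNReal.ofReal (t q) * WppC c p a (b q))
    (a : Fin Q → Measure Ω) (ha : ∀ q, a q ∈ 𝒜) :
    (⨅ g : Fin Q → G, MMval c p t (fun q => (a q).map (fun x => g q • x)))
      = ⨅ abar ∈ 𝒜, ∑ q, ENNReal.ofReal (t q) *
          ⨅ g : G, WppC c p abar ((a q).map (fun x => g • x)) := by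
  have key : ∀ g : Fin Q → G,
      MMval c p t (fun q => (a q).map (fun x => g q • x))
        = ⨅ abar ∈ 𝒜, ∑ q, ENNReal.ofReal (t q)
            * WppC c p abar ((a q).map (fun x => g q • x)) :=
    fun g => hequiv _ fun q => h𝒜_stable _ _ (ha q)
  simp_rw [key]
  rw [iInf_comm]
  refine iInf_congr fun abar => ?_
  rw [iInf_comm]
  refine iInf_congr fun habar => ?_
  rw [iInf_pi_sum_aux (f := fun q x => ENNReal.ofReal (t q)
    * WppC c p abar ((a q).map (fun y => x • y)))]
  refine Finset.sum_congr rfl fun q _ => ?_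
  exact (ENNReal.mul_iInf (by simp)).symm
end
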